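/- For every nonidentity element x of the alternating group A_n with n ≥ 5, there exists a 3-cycle y ∈ A_n such that the commutator [x,y] = x⁻¹y⁻¹xy is nontrivial and moves at most 5 points (its support has size at most 5). -/

import Mathlib

/-- For every nonidentity `x ∈ A_n` (`n ≥ 5`) there is a 3-cycle `y ∈ A_n` such
that `[x,y] = x⁻¹y⁻¹xy` is nontrivial and has support of size at most 5. -/
theorem exists_three_cycle_commutator_small_support (n : ℕ) (hn : 5 ≤ n)
    (x : Equiv.Perm (Fin n)) (hx : x ∈ alternatingGroup (Fin n)) (hx1 : x ≠ 1) :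
    ∃ y : Equiv.Perm (Fin n), y ∈ alternatingGroup (Fin n) ∧ y.IsThreeCycle ∧
      x⁻¹ * y⁻¹ * x * y ≠ 1 ∧ (x⁻¹ * y⁻¹ * x * y).support.card ≤ 5 := by
  classical
  -- find a moved point
  have haex : ∃ a : Fin n, x a ≠ a := by
    by_contra h
    push_neg at h
    exact hx1 (Equiv.ext h)
  obtain ⟨a, ha⟩ := haex
  set b := x a with hb
  have hab : a ≠ b := fun h => ha h.symm
  -- find c outside {a, b, x⁻¹ a}
  have hcard : (({a, b, x⁻¹ a} : Finset (Fin n))ᶜ).Nonempty := by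
    rw [← Finset.card_pos, Finset.card_compl, Fintype.card_fin]
    have h3 : ({a, b, x⁻¹ a} : Finset (Fin n)).card ≤ 3 :=
      (Finset.card_insert_le _ _).trans (Nat.succ_le_succ
        ((Finset.card_insert_le _ _).trans (Nat.succ_le_succ
          (Finset.card_singleton _).le)))
    omega
  obtain ⟨c, hc⟩ := hcard
  rw [Finset.mem_compl, Finset.mem_insert, Finset.mem_insert, Finset.mem_singleton] at hc
  push_neg at hc
  obtain ⟨hca, hcb, hcxa⟩ := hc
  have hac : a ≠ c := fun h => hca h.symm
  have hbc : b ≠ c := fun h => hcb h.symm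
  set y : Equiv.Perm (Fin n) := Equiv.swap a b * Equiv.swap a c with hy
  have h3c : y.IsThreeCycle := Equiv.Perm.isThreeCycle_swap_mul_swap_same hab hac hbc
  have hya : y a = c := by
    simp [hy, Equiv.Perm.mul_apply, Equiv.swap_apply_left, Equiv.swap_apply_of_ne_of_ne hca hcb]
  have hyb : y b = a := by
    simp [hy, Equiv.Perm.mul_apply, Equiv.swap_apply_of_ne_of_ne hab.symm hbc,
      Equiv.swap_apply_right]
  refine ⟨y, h3c.mem_alternatingGroup, h3c, ?_, ?_⟩
  · -- nontriviality
    intro h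
    have hcomm : x * y = y * x := by
      have := congrArg (fun z => y * x * z) h
      simpa [mul_assoc] using this
    have := congrArg (fun p : Equiv.Perm (Fin n) => p a) hcomm
    simp only [Equiv.Perm.mul_apply] at this
    rw [hya, ← hb, hyb] at this
    -- this : x c = a
    apply hcxa
    rw [← this, Equiv.Perm.inv_def, Equiv.symm_apply_apply]
  · -- support bound
    have hsub : (x⁻¹ * y⁻¹ * x * y).support ⊆ {a, b, c, x⁻¹ a, x⁻¹ c} := by
      intro z hz
      rw [Equiv.Perm.mem_support] at hz
      by_contra hzS
      simp only [Finset.mem_insert, Finset.mem_singleton] at hzS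
      push_neg at hzS
      obtain ⟨hza, hzb, hzc, hzxa, hzxc⟩ := hzS
      apply hz
      have hyz : y z = z := by
        simp [hy, Equiv.Perm.mul_apply, Equiv.swap_apply_of_ne_of_ne hza hzc,
          Equiv.swap_apply_of_ne_of_ne hza hzb]
      have hxza : x z ≠ a := fun h => hzxa (by rw [← h, Equiv.Perm.inv_def, Equiv.symm_apply_apply])
      have hxzb : x z ≠ b := fun h => hza (x.injective (by rw [h, hb]))
      have hxzc : x z ≠ c := fun h => hzxc (by rw [← h, Equiv.Perm.inv_def, Equiv.symm_apply_apply])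
      have hyxz : y (x z) = x z := by
        simp [hy, Equiv.Perm.mul_apply, Equiv.swap_apply_of_ne_of_ne hxza hxzc,
          Equiv.swap_apply_of_ne_of_ne hxza hxzb]
      have hyinv : y⁻¹ (x z) = x z := by
        conv_lhs => rw [← hyxz]
        rw [Equiv.Perm.inv_def, Equiv.symm_apply_apply]
      simp only [Equiv.Perm.mul_apply, hyz, hyinv, Equiv.Perm.inv_eq_iff_eq]
    refine (Finset.card_le_card hsub).trans ?_
    exact (Finset.card_insert_le _ _).trans (Nat.succ_le_succ
      ((Finset.card_insert_le _ _).trans (Nat.succ_le_succ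
        ((Finset.card_insert_le _ _).trans (Nat.succ_le_succ
          ((Finset.card_insert_le _ _).trans (Nat.succ_le_succ
            (Finset.card_singleton _).le)))))))
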